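/- Suppose the adoption probability depends only on the certificate, q(a, r) = q(r), the model 𝓜_DM is sufficiently rich (for every probability distribution G on [0,1]² with G({(l, r) : l ≤ r}) ≥ 1 − α, there exists (θ, P) ∈ 𝓜_DM under which (L(δ(Y), θ), R(Y)) ∼ G), and additionally sup_{r ∈ [0,1]} q(r) = 1. Then sup over (θ, P) ∈ 𝓜_DM of E_P[L(δ_Q(Y), θ)] ≤ C + α·(1 − C) holds if and only if q(r) ≤ 1(r ≤ C) for all r ∈ [0,1]. -/

import Mathlib

open MeasureTheory Set

/-- helper: integral of a measurable function against a two-point combination of Diracs. -/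
lemma statement4_dirac_int (g : ℝ × ℝ → ℝ) (hg : Measurable g) (a b : ℝ) (ha : 0 ≤ a)
    (hb : 0 ≤ b) (x z : ℝ × ℝ) :
    ∫ w, g w ∂(ENNReal.ofReal a • Measure.dirac x + ENNReal.ofReal b • Measure.dirac z)
      = a * g x + b * g z := by
  have hint : ∀ y : ℝ × ℝ, Integrable g (Measure.dirac y) := by
    intro y
    refine Integrable.mono' (integrable_const ‖g y‖) hg.aestronglyMeasurable ?_
    rw [MeasureTheory.ae_dirac_eq]
    exact Filter.eventually_pure.2 le_rfl
  rw [integral_add_measure ((hint x).smul_measure ENNReal.ofReal_ne_top)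
      ((hint z).smul_measure ENNReal.ofReal_ne_top),
    integral_smul_measure, integral_smul_measure, integral_dirac, integral_dirac,
    ENNReal.toReal_ofReal ha, ENNReal.toReal_ofReal hb]
  simp [smul_eq_mul]

theorem statement4
    {Y : Type*} [MeasurableSpace Y] {A : Type*} {Θ : Type*}
    (L : A → Θ → ℝ) (hL : ∀ a θ, L a θ ∈ Icc (0 : ℝ) 1)
    (α : ℝ) (hα : α ∈ Ioo (0 : ℝ) 1)
    (δ : Y → A) (R : Y → ℝ) (hR01 : ∀ y, R y ∈ Icc (0 : ℝ) 1)
    (M : Set (Θ × Measure Y))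
    (hMprob : ∀ p ∈ M, IsProbabilityMeasure p.2)
    (hMdef : ∀ p ∈ M, ENNReal.ofReal (1 - α) ≤ p.2 {y | L (δ y) p.1 ≤ R y})
    (C : ℝ) (hC : C ∈ Ico (0 : ℝ) 1)
    (q : ℝ → ℝ) (hq01 : ∀ r, q r ∈ Icc (0 : ℝ) 1) (hmeasq : Measurable q)
    (hmeasL : ∀ θ : Θ, Measurable fun y => L (δ y) θ)
    (hmeasR : Measurable R)
    (hrich : ∀ G : Measure (ℝ × ℝ), IsProbabilityMeasure G →
      G (Icc (0 : ℝ) 1 ×ˢ Icc (0 : ℝ) 1) = 1 →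
      ENNReal.ofReal (1 - α) ≤ G {x | x.1 ≤ x.2} →
      ∃ p ∈ M, Measure.map (fun y => (L (δ y) p.1, R y)) p.2 = G)
    (hsup : sSup (q '' Icc (0 : ℝ) 1) = 1) :
    (∀ p ∈ M,
        ∫ y, (q (R y) * L (δ y) p.1 + (1 - q (R y)) * C) ∂p.2 ≤ C + α * (1 - C))
      ↔ (∀ r ∈ Icc (0 : ℝ) 1, q r ≤ if r ≤ C then 1 else 0) := by
  obtain ⟨hα0, hα1⟩ := hα
  obtain ⟨hC0, hC1⟩ := hC
  set g : ℝ × ℝ → ℝ := fun x => q x.2 * x.1 + (1 - q x.2) * C with hg_def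
  have hgm : Measurable g := by
    apply Measurable.add
    · exact (hmeasq.comp measurable_snd).mul measurable_fst
    · exact (measurable_const.sub (hmeasq.comp measurable_snd)).mul measurable_const
  -- for p ∈ M whose pushforward is G, the expectation equals ∫ g dG
  have heval : ∀ p ∈ M, ∀ G : Measure (ℝ × ℝ),
      Measure.map (fun y => (L (δ y) p.1, R y)) p.2 = G →
      ∫ y, (q (R y) * L (δ y) p.1 + (1 - q (R y)) * C) ∂p.2 = ∫ x, g x ∂G := by
    intro p hp G hmap
    rw [← hmap, integral_map (((hmeasL p.1).prodMk hmeasR).aemeasurable)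
      hgm.aestronglyMeasurable]
  constructor
  · -- forward direction
    intro hbound r hr
    by_cases hrC : r ≤ C
    · simp only [if_pos hrC]
      exact (hq01 r).2
    · simp only [if_neg hrC]
      by_contra hqr
      push_neg at hqr
      have hrgtC : C < r := not_le.mp hrC
      by_cases hq1 : q 1 = 1
      · -- point mass at (1,1)
        have hprob : IsProbabilityMeasure (Measure.dirac ((1 : ℝ), (1 : ℝ))) :=
          Measure.dirac.isProbabilityMeasure
        have hbox : (Measure.dirac ((1 : ℝ), (1 : ℝ))) (Icc (0:ℝ) 1 ×ˢ Icc (0:ℝ) 1) = 1 :=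
          Measure.dirac_apply_of_mem (by constructor <;> constructor <;> norm_num)
        have hcov : ENNReal.ofReal (1 - α)
            ≤ (Measure.dirac ((1 : ℝ), (1 : ℝ))) {x : ℝ × ℝ | x.1 ≤ x.2} := by
          rw [Measure.dirac_apply_of_mem (by simp : ((1:ℝ),(1:ℝ)) ∈ {x : ℝ × ℝ | x.1 ≤ x.2})]
          exact ENNReal.ofReal_le_one.mpr (by linarith)
        obtain ⟨p, hp, hmap⟩ := hrich _ hprob hbox hcov
        have hE := hbound p hp
        rw [heval p hp _ hmap, integral_dirac] at hE
        have hg11 : g ((1 : ℝ), (1 : ℝ)) = 1 := by simp [hg_def, hq1]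
        rw [hg11] at hE
        nlinarith [mul_pos (show (0:ℝ) < 1 - α by linarith) (show (0:ℝ) < 1 - C by linarith)]
      · -- two-point construction
        have hq1lt : q 1 < 1 := lt_of_le_of_ne (hq01 1).2 hq1
        set ε : ℝ := min (1 - q 1) ((1 - α) * q r * (r - C) / (α * (1 - C))) with hε_def
        have hεpos : 0 < ε := by
          apply lt_min (by linarith)
          exact div_pos (mul_pos (mul_pos (by linarith) hqr) (by linarith))
            (mul_pos hα0 (by linarith))
        -- find r₁ with q r₁ > 1 - ε
        have hne : (q '' Icc (0:ℝ) 1).Nonempty := ⟨q 0, 0, by norm_num, rfl⟩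
        obtain ⟨v, hv, hvgt⟩ := exists_lt_of_lt_csSup hne (by rw [hsup]; linarith : 1 - ε < sSup (q '' Icc (0:ℝ) 1))
        obtain ⟨r₁, hr₁, rfl⟩ := hv
        have hr₁lt1 : r₁ < 1 := by
          rcases lt_or_eq_of_le hr₁.2 with h | h
          · exact h
          · exfalso
            rw [h] at hvgt
            have : ε ≤ 1 - q 1 := min_le_left _ _
            linarith
        set G : Measure (ℝ × ℝ) := ENNReal.ofReal (1 - α) • Measure.dirac (r, r)
            + ENNReal.ofReal α • Measure.dirac (1, r₁) with hG_def
        have hSmeas : MeasurableSet {x : ℝ × ℝ | x.1 ≤ x.2} :=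
          measurableSet_le measurable_fst measurable_snd
        have hprob : IsProbabilityMeasure G := by
          constructor
          rw [hG_def]
          simp only [Measure.add_apply, Measure.smul_apply, smul_eq_mul, measure_univ, mul_one]
          rw [← ENNReal.ofReal_add (by linarith) (by linarith)]
          norm_num
        have hbox : G (Icc (0:ℝ) 1 ×ˢ Icc (0:ℝ) 1) = 1 := by
          rw [hG_def]
          simp only [Measure.add_apply, Measure.smul_apply, smul_eq_mul]
          rw [Measure.dirac_apply_of_mem
              (by constructor <;> constructor <;> simp [hr.1, le_of_lt hr₁lt1, hr.2, hr₁.1, hr₁.2]),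
            Measure.dirac_apply_of_mem
              (by constructor <;> constructor <;> simp [hr.1, le_of_lt hr₁lt1, hr.2, hr₁.1, hr₁.2])]
          simp only [mul_one]
          rw [← ENNReal.ofReal_add (by linarith) (by linarith)]
          norm_num
        have hcov : ENNReal.ofReal (1 - α) ≤ G {x : ℝ × ℝ | x.1 ≤ x.2} := by
          rw [hG_def]
          simp only [Measure.add_apply, Measure.smul_apply, smul_eq_mul]
          rw [Measure.dirac_apply_of_mem
            (show ((r, r) : ℝ × ℝ) ∈ {x : ℝ × ℝ | x.1 ≤ x.2} from le_refl r)]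
          simp only [mul_one]
          exact le_add_right le_rfl
        obtain ⟨p, hp, hmap⟩ := hrich G hprob hbox hcov
        have hE := hbound p hp
        rw [heval p hp G hmap, hG_def,
          statement4_dirac_int g hgm (1 - α) α (by linarith) (by linarith)] at hE
        simp only [hg_def] at hE
        -- arithmetic contradiction
        have hεle : ε * (α * (1 - C)) ≤ (1 - α) * q r * (r - C) := by
          have := min_le_right (1 - q 1) ((1 - α) * q r * (r - C) / (α * (1 - C)))
          rw [← hε_def] at this
          calc ε * (α * (1 - C)) ≤ ((1 - α) * q r * (r - C) / (α * (1 - C))) * (α * (1 - C)) := by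
                apply mul_le_mul_of_nonneg_right this (mul_nonneg hα0.le (by linarith))
            _ = (1 - α) * q r * (r - C) := by
                rw [div_mul_cancel₀ _ (ne_of_gt (mul_pos hα0 (by linarith)))]
        have hq₁ := hq01 r₁
        have h1 : α * (1 - C) * (1 - ε) < α * (1 - C) * q r₁ :=
          mul_lt_mul_of_pos_left hvgt (mul_pos hα0 (by linarith))
        nlinarith [h1, hεle]
  · -- backward direction
    intro hq p hp
    have hprob : IsProbabilityMeasure p.2 := hMprob p hp
    set S : Set Y := {y | L (δ y) p.1 ≤ R y} with hS_def
    have hSmeas : MeasurableSet S := measurableSet_le (hmeasL p.1) hmeasR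
    set f : Y → ℝ := fun y => q (R y) * L (δ y) p.1 + (1 - q (R y)) * C with hf_def
    set h : Y → ℝ := fun y => C + Sᶜ.indicator (fun _ => (1 - C)) y with hh_def
    have hfh : ∀ y, f y ≤ h y := by
      intro y
      have hqy := hq01 (R y)
      have hLy := hL (δ y) p.1
      have hRy := hR01 y
      by_cases hyS : y ∈ S
      · have hLR : L (δ y) p.1 ≤ R y := hyS
        have hind : Sᶜ.indicator (fun _ => (1 - C)) y = 0 :=
          indicator_of_notMem (by simp [hyS]) _
        simp only [hh_def, hind, add_zero]
        rcases le_or_gt (R y) C with hc | hc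
        · simp only [hf_def]
          nlinarith [mul_nonneg hqy.1 (show (0:ℝ) ≤ C - L (δ y) p.1 by linarith [hLR, hc])]
        · have h0 := hq (R y) hRy
          rw [if_neg (not_le.mpr hc)] at h0
          have hq0 : q (R y) = 0 := le_antisymm h0 hqy.1
          simp [hf_def, hq0]
      · have hind : Sᶜ.indicator (fun _ => (1 - C)) y = 1 - C :=
          indicator_of_mem (show y ∈ Sᶜ from hyS) _
        simp only [hh_def, hind, hf_def]
        nlinarith [mul_nonneg hqy.1 (sub_nonneg.mpr hLy.2),
          mul_nonneg (sub_nonneg.mpr hqy.2) (sub_nonneg.mpr hC1.le)]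
    have hfint : Integrable f p.2 := by
      refine Integrable.mono' (integrable_const (1 : ℝ))
        (((hmeasq.comp hmeasR).mul (hmeasL p.1)).add
          ((measurable_const.sub (hmeasq.comp hmeasR)).mul measurable_const)).aestronglyMeasurable
        (Filter.Eventually.of_forall fun y => ?_)
      have hqy := hq01 (R y)
      have hLy := hL (δ y) p.1
      rw [Real.norm_eq_abs, abs_le]
      simp only [hf_def]
      constructor <;>
        nlinarith [mul_nonneg hqy.1 hLy.1,
          mul_nonneg (sub_nonneg.mpr hqy.2) hC0,
          mul_nonneg hqy.1 (sub_nonneg.mpr hLy.2),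
          mul_nonneg (sub_nonneg.mpr hqy.2) (sub_nonneg.mpr hC1.le)]
    have hhint : Integrable h p.2 := by
      exact (integrable_const C).add ((integrable_const (1 - C)).indicator hSmeas.compl)
    have hint_le : ∫ y, f y ∂p.2 ≤ ∫ y, h y ∂p.2 :=
      integral_mono hfint hhint hfh
    have hhval : ∫ y, h y ∂p.2 = C + (p.2 Sᶜ).toReal * (1 - C) := by
      rw [hh_def]
      rw [integral_add (integrable_const C) ((integrable_const (1 - C)).indicator hSmeas.compl)]
      rw [integral_const, integral_indicator_const _ hSmeas.compl]
      simp [smul_eq_mul, measure_univ, measureReal_def]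
    have hcompl : (p.2 Sᶜ).toReal ≤ α := by
      have h1 : p.2 Sᶜ ≤ ENNReal.ofReal α := by
        rw [measure_compl hSmeas (measure_ne_top _ _), measure_univ]
        have : ENNReal.ofReal α = 1 - ENNReal.ofReal (1 - α) := by
          rw [← ENNReal.ofReal_one, ← ENNReal.ofReal_sub _ (by linarith)]
          norm_num
        rw [this]
        exact tsub_le_tsub_left (hMdef p hp) 1
      exact ENNReal.toReal_le_of_le_ofReal (le_of_lt hα0) h1
    have : ∫ y, f y ∂p.2 ≤ C + α * (1 - C) := by
      rw [hhval] at hint_le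
      nlinarith [ENNReal.toReal_nonneg (a := p.2 Sᶜ)]
    exact this
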